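/- In the multi-target detection model with an arbitrary spacing distribution (non-overlap condition s_k − s_{k−1} ≥ L), for every 0 ≤ l ≤ L−1 the deterministic identity a²_{s∗x}[l] = ρ₀ a_x²[l] + ((M−1)L/N) Σ_{j=L}^{L+l−1} ξ[j] a_x²[j−l] holds, where ξ is the pair separation function of s. -/

import Mathlib

/-- The sequence `z` of length `m`, zero-padded to all of `ℤ`. -/
noncomputable def zpad (m : ℕ) (z : ℕ → ℝ) : ℤ → ℝ :=
  fun i => if 0 ≤ i ∧ i < (m : ℤ) then z i.toNat else 0

/-- Second-order autocorrelation of the length-`m` sequence `z` with integer shift `l`: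
`a_z²[l] = (1/m) Σ_{i=0}^{m−1} z[i] z[i+l]`, with `z` extended by zero. -/
noncomputable def acorr2 (m : ℕ) (z : ℕ → ℝ) (l : ℤ) : ℝ :=
  (1 / (m : ℝ)) * ∑ i ∈ Finset.range m, zpad m z i * zpad m z (i + l)

/-- The (zero-padded) linear convolution `s∗x` of the binary sequence `s` with the signal `x`
of length `L`, where `s` has `M` nonzero entries at the positions `p 0 < p 1 < ⋯ < p (M−1)`:
`(s∗x)[i] = Σ_k x[i − p k]`, with `x` extended by zero. -/
noncomputable def sconv (L M : ℕ) (x : ℕ → ℝ) (p : Fin M → ℕ) : ℤ → ℝ :=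
  fun i => ∑ k : Fin M, zpad L x (i - (p k : ℤ))

/-- The pair separation function `ξ[j]` of the binary sequence with `M` nonzero entries at the
positions `p 0 < p 1 < ⋯ < p (M−1)`:
`ξ[j] = (1/(M−1)) · #{k ∈ {1,…,M−1} : p k − p (k−1) = j}`. -/
noncomputable def pairSep (M : ℕ) (p : Fin M → ℕ) (j : ℕ) : ℝ :=
  (Finset.univ.filter (fun k : Fin (M - 1) =>
      p ⟨(k : ℕ) + 1, by have := k.isLt; omega⟩ = p ⟨(k : ℕ), by have := k.isLt; omega⟩ + j)).card
    / ((M : ℝ) - 1)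

lemma zpad_eq_zero {L : ℕ} {x : ℕ → ℝ} {t : ℤ} (h : ¬ (0 ≤ t ∧ t < (L:ℤ))) : zpad L x t = 0 := by
  simp only [zpad, if_neg h]

lemma zpad_natCast {L : ℕ} {x : ℕ → ℝ} {i : ℕ} (h : i < L) : zpad L x (i : ℤ) = x i := by
  simp [zpad, h]

/-- unnormalized autocorrelation sum -/
noncomputable def acS (L : ℕ) (x : ℕ → ℝ) (a : ℤ) : ℝ :=
  ∑ t ∈ Finset.range L, zpad L x t * zpad L x (t + a)

lemma acorr2_eq_acS (L : ℕ) (x : ℕ → ℝ) (a : ℤ) : acorr2 L x a = 1/(L:ℝ) * acS L x a := rfl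

lemma acS_eq_zero {L : ℕ} {x : ℕ → ℝ} {a : ℤ} (h : (L:ℤ) ≤ a ∨ a ≤ -(L:ℤ)) : acS L x a = 0 := by
  apply Finset.sum_eq_zero
  intro i hi
  simp only [Finset.mem_range] at hi
  rcases h with h | h
  · rw [zpad_eq_zero (t := (i:ℤ) + a) (by omega), mul_zero]
  · rw [zpad_eq_zero (t := (i:ℤ) + a) (by omega), mul_zero]

lemma acS_double {L : ℕ} {x : ℕ → ℝ} (a : ℤ) :
    acS L x a = ∑ i ∈ Finset.range L, ∑ j ∈ Finset.range L,
      (if (j:ℤ) = (i:ℤ) + a then x i * x j else 0) := by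
  refine Finset.sum_congr rfl fun i hi => ?_
  simp only [Finset.mem_range] at hi
  by_cases h : 0 ≤ (i:ℤ) + a ∧ (i:ℤ) + a < L
  · have h1 : zpad L x (i:ℤ) = x i := zpad_natCast hi
    have h2 : zpad L x ((i:ℤ) + a) = x ((i:ℤ)+a).toNat := by simp only [zpad, if_pos h]
    rw [h1, h2, Finset.sum_eq_single ((i:ℤ)+a).toNat]
    · rw [if_pos (by omega)]
    · intro j hj hne
      rw [if_neg]
      intro hc
      exact hne (by omega)
    · intro hmem
      exact absurd (Finset.mem_range.mpr (by omega)) hmem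
  · rw [zpad_eq_zero h, mul_zero]
    symm
    apply Finset.sum_eq_zero
    intro j hj
    simp only [Finset.mem_range] at hj
    rw [if_neg]
    intro hc
    exact h (by omega)

lemma acS_neg {L : ℕ} {x : ℕ → ℝ} (a : ℤ) : acS L x (-a) = acS L x a := by
  rw [acS_double, acS_double, Finset.sum_comm]
  refine Finset.sum_congr rfl fun i _ => Finset.sum_congr rfl fun j _ => ?_
  by_cases h : (j:ℤ) = (i:ℤ) + a
  · rw [if_pos (by omega), if_pos h, mul_comm]
  · rw [if_neg (by omega), if_neg h]

lemma sum_shift {L : ℕ} {x : ℕ → ℝ} (N c : ℕ) (a : ℤ) (hcN : c + L ≤ N) :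
    ∑ i ∈ Finset.range N, zpad L x ((i:ℤ) - c) * zpad L x ((i:ℤ) - c + a) = acS L x a := by
  have hsub : Finset.Ico c (c+L) ⊆ Finset.range N := by
    intro i hi
    simp only [Finset.mem_Ico, Finset.mem_range] at *
    omega
  rw [← Finset.sum_subset hsub (by
    intro i hi hni
    simp only [Finset.mem_Ico] at hni
    simp only [Finset.mem_range] at hi
    rw [zpad_eq_zero (by omega), zero_mul])]
  rw [Finset.sum_Ico_eq_sum_range]
  simp only [Nat.add_sub_cancel_left]
  refine Finset.sum_congr rfl fun t ht => ?_
  have h1 : ((c + t : ℕ) : ℤ) - (c:ℤ) = (t:ℤ) := by push_cast; ring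
  rw [h1]

lemma chainq {L M : ℕ} {q : ℕ → ℕ} (hsepq : ∀ m, m + 1 < M → q m + L ≤ q (m+1)) :
    ∀ j, j < M → ∀ i, i < j → q i + L ≤ q j := by
  intro j
  induction j with
  | zero => intro _ i hi; omega
  | succ m ih =>
    intro hj i hi
    rcases Nat.lt_succ_iff_lt_or_eq.mp hi with h | h
    · have h1 := ih (by omega) i h
      have h2 := hsepq m hj
      omega
    · subst h; exact hsepq i hj

/-- the cross term contribution of a consecutive pair -/
noncomputable def Dq (L M l : ℕ) (x : ℕ → ℝ) (q : ℕ → ℕ) (m : ℕ) : ℝ :=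
  if m + 1 < M then acS L x ((q (m+1) : ℤ) - (q m : ℤ) - (l:ℤ)) else 0

/-- Multi-target detection with an arbitrary spacing distribution (non-overlap condition:
consecutive occurrences separated by at least `L`): for every `0 ≤ l ≤ L−1`,
`a²_{s∗x}[l] = ρ₀ a_x²[l] + ((M−1)L/N) Σ_{j=L}^{L+l−1} ξ[j] a_x²[j−l]`,
where `ρ₀ = ML/N` and `ξ` is the pair separation function of `s`. -/
theorem mtd_second_order_arbitrary_spacing
    (L N M : ℕ) (hL : 0 < L) (hLN : L ≤ N) (hM : 2 ≤ M)
    (x : ℕ → ℝ) (p : Fin M → ℕ)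
    (hsep : ∀ k : ℕ, ∀ hk : k + 1 < M, p ⟨k, by omega⟩ + L ≤ p ⟨k + 1, hk⟩)
    (hin : ∀ k : Fin M, p k + L ≤ N)
    (l : ℕ) (hl : l < L) :
    (1 / (N : ℝ)) * ∑ i ∈ Finset.range N, sconv L M x p i * sconv L M x p (i + l)
      = ((M : ℝ) * L / N) * acorr2 L x l
        + (((M : ℝ) - 1) * L / N) *
            ∑ j ∈ Finset.Ico L (L + l), pairSep M p j * acorr2 L x ((j : ℤ) - l) := by
  obtain ⟨q, hq⟩ : ∃ q : ℕ → ℕ, ∀ k : Fin M, p k = q (k : ℕ) :=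
    ⟨fun m => if h : m < M then p ⟨m, h⟩ else 0, fun k => by simp [k.isLt]⟩
  have hMne : (M:ℝ) - 1 ≠ 0 := by
    have : (2:ℝ) ≤ (M:ℝ) := by exact_mod_cast hM
    linarith
  have hLne : (L:ℝ) ≠ 0 := Nat.cast_ne_zero.mpr (by omega)
  have hNne : (N:ℝ) ≠ 0 := Nat.cast_ne_zero.mpr (by omega)
  have hsepq : ∀ m, m + 1 < M → q m + L ≤ q (m+1) := by
    intro m h
    have := hsep m h
    rwa [hq ⟨m, by omega⟩, hq ⟨m+1, h⟩] at this
  have hinq : ∀ m, m < M → q m + L ≤ N := by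
    intro m h
    have := hin ⟨m, h⟩
    rwa [hq ⟨m, h⟩] at this
  -- Step 1
  have step1 : ∑ i ∈ Finset.range N, sconv L M x p i * sconv L M x p (i + l)
      = ∑ k : Fin M, ∑ k' : Fin M, acS L x ((l:ℤ) + (q (k:ℕ) : ℤ) - (q (k':ℕ) : ℤ)) := by
    unfold sconv
    simp only [hq]
    rw [Finset.sum_congr rfl (fun i _ => Finset.sum_mul_sum Finset.univ Finset.univ _ _)]
    rw [Finset.sum_comm]
    refine Finset.sum_congr rfl fun k _ => ?_
    rw [Finset.sum_comm]
    refine Finset.sum_congr rfl fun k' _ => ?_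
    have hrw : ∀ i ∈ Finset.range N,
        zpad L x ((i:ℤ) - q (k:ℕ)) * zpad L x ((i:ℤ) + (l:ℤ) - q (k':ℕ))
        = zpad L x ((i:ℤ) - q (k:ℕ)) *
          zpad L x (((i:ℤ) - q (k:ℕ)) + ((l:ℤ) + (q (k:ℕ):ℤ) - (q (k':ℕ):ℤ))) := by
      intro i _
      congr 1
      ring_nf
    rw [Finset.sum_congr rfl hrw]
    exact sum_shift N (q (k:ℕ)) _ (hinq (k:ℕ) k.isLt)
  -- Step 2
  have step2 : ∀ k : Fin M, ∑ k' : Fin M, acS L x ((l:ℤ) + (q (k:ℕ):ℤ) - (q (k':ℕ):ℤ))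
      = acS L x l + Dq L M l x q (k:ℕ) := by
    intro k
    by_cases hk : (k:ℕ) + 1 < M
    · have hne : k ≠ (⟨(k:ℕ)+1, hk⟩ : Fin M) := by
        intro h
        have := congrArg Fin.val h
        simp only [Fin.val_mk] at this
        omega
      rw [← Finset.sum_subset (Finset.subset_univ {k, (⟨(k:ℕ)+1, hk⟩ : Fin M)}) (by
        intro k' _ hk'
        simp only [Finset.mem_insert, Finset.mem_singleton] at hk'
        push_neg at hk'
        apply acS_eq_zero
        rcases lt_trichotomy (k':ℕ) (k:ℕ) with h | h | h
        · have := chainq hsepq (k:ℕ) k.isLt (k':ℕ) h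
          left; omega
        · exact absurd (Fin.ext h) hk'.1
        · have h2 : (k:ℕ) + 2 ≤ (k':ℕ) := by
            rcases Nat.lt_or_ge (k':ℕ) ((k:ℕ)+2) with hh | hh
            · exfalso
              exact hk'.2 (Fin.ext (by simp only [Fin.val_mk]; omega))
            · omega
          have ha := hsepq (k:ℕ) hk
          have hb := chainq hsepq (k':ℕ) k'.isLt ((k:ℕ)+1) (by omega)
          right; omega)]
      rw [Finset.sum_pair hne]
      congr 1
      · rw [show (l:ℤ) + (q (k:ℕ):ℤ) - (q (k:ℕ):ℤ) = (l:ℤ) by ring]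
      · simp only [Fin.val_mk]
        rw [show (l:ℤ) + (q (k:ℕ):ℤ) - (q ((k:ℕ)+1):ℤ)
            = -((q ((k:ℕ)+1):ℤ) - (q (k:ℕ):ℤ) - (l:ℤ)) by ring, acS_neg]
        rw [Dq, if_pos hk]
    · rw [Dq, if_neg hk, add_zero]
      rw [Finset.sum_eq_single_of_mem k (Finset.mem_univ k) (by
        intro k' _ hk'
        apply acS_eq_zero
        have hlt : (k':ℕ) < (k:ℕ) := by
          have h1 := k.isLt
          have h2 := k'.isLt
          have h3 : (k':ℕ) ≠ (k:ℕ) := fun h => hk' (Fin.ext h)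
          omega
        have := chainq hsepq (k:ℕ) k.isLt (k':ℕ) hlt
        left; omega)]
      rw [show (l:ℤ) + (q (k:ℕ):ℤ) - (q (k:ℕ):ℤ) = (l:ℤ) by ring]
  -- Step 3
  have step3 : ∑ k : Fin M, (acS L x l + Dq L M l x q (k:ℕ))
      = (M:ℝ) * acS L x l + ∑ m ∈ Finset.range (M-1), Dq L M l x q m := by
    rw [Finset.sum_add_distrib, Finset.sum_const, Finset.card_univ, Fintype.card_fin,
      nsmul_eq_mul]
    congr 1
    rw [Fin.sum_univ_eq_sum_range (fun m => Dq L M l x q m) M]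
    have hM' : Finset.range M = Finset.range ((M-1)+1) := by
      congr 1; omega
    rw [hM', Finset.sum_range_succ]
    have hlast : Dq L M l x q (M-1) = 0 := by
      rw [Dq, if_neg (by omega)]
    rw [hlast, add_zero]
  -- Step 4 : the RHS pair-separation sum
  have step4 : ∑ j ∈ Finset.Ico L (L + l), pairSep M p j * acorr2 L x ((j : ℤ) - l)
      = (1/((M:ℝ)-1)) * ((1/(L:ℝ)) * ∑ m ∈ Finset.range (M-1), Dq L M l x q m) := by
    have hcast : ∀ j, pairSep M p j * acorr2 L x ((j : ℤ) - l)
        = (1/((M:ℝ)-1)) * ((1/(L:ℝ)) *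
            ((∑ k : Fin (M-1), if q ((k:ℕ)+1) = q (k:ℕ) + j then (1:ℝ) else 0)
              * acS L x ((j:ℤ) - (l:ℤ)))) := by
      intro j
      rw [pairSep, acorr2_eq_acS]
      have hfilt : (Finset.univ.filter (fun k : Fin (M - 1) =>
          p ⟨(k : ℕ) + 1, by have := k.isLt; omega⟩ = p ⟨(k : ℕ), by have := k.isLt; omega⟩ + j)).card
          = (Finset.univ.filter (fun k : Fin (M - 1) =>
              q ((k:ℕ)+1) = q (k:ℕ) + j)).card := by
        congr 1
        apply Finset.filter_congr
        intro k _
        rw [hq ⟨(k:ℕ)+1, by have := k.isLt; omega⟩, hq ⟨(k:ℕ), by have := k.isLt; omega⟩]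
      rw [hfilt, Finset.card_filter]
      push_cast
      ring
    rw [Finset.sum_congr rfl (fun j _ => hcast j), ← Finset.mul_sum, ← Finset.mul_sum]
    congr 1
    congr 1
    have hswap : ∀ j ∈ Finset.Ico L (L+l),
        (∑ k : Fin (M-1), if q ((k:ℕ)+1) = q (k:ℕ) + j then (1:ℝ) else 0)
          * acS L x ((j:ℤ) - (l:ℤ))
        = ∑ k : Fin (M-1), (if q ((k:ℕ)+1) = q (k:ℕ) + j then acS L x ((j:ℤ) - (l:ℤ)) else 0) := by
      intro j _
      rw [Finset.sum_mul]
      refine Finset.sum_congr rfl fun k _ => ?_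
      rw [ite_mul, one_mul, zero_mul]
    rw [Finset.sum_congr rfl hswap, Finset.sum_comm]
    rw [← Fin.sum_univ_eq_sum_range (fun m => Dq L M l x q m) (M-1)]
    refine Finset.sum_congr rfl fun k _ => ?_
    have hk1 : (k:ℕ) + 1 < M := by have := k.isLt; omega
    have hs := hsepq (k:ℕ) hk1
    by_cases hd : q ((k:ℕ)+1) - q (k:ℕ) < L + l
    · rw [Finset.sum_eq_single (q ((k:ℕ)+1) - q (k:ℕ))]
      · rw [if_pos (by omega), Dq, if_pos hk1]
        congr 1
        omega
      · intro j _ hj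
        rw [if_neg (by omega)]
      · intro habs
        exact absurd (Finset.mem_Ico.mpr ⟨by omega, hd⟩) habs
    · rw [Finset.sum_eq_zero (by
        intro j hj
        simp only [Finset.mem_Ico] at hj
        rw [if_neg (by omega)])]
      rw [Dq, if_pos hk1]
      symm
      apply acS_eq_zero
      left
      omega
  -- assemble
  rw [step1, Finset.sum_congr rfl (fun k _ => step2 k), step3, step4, acorr2_eq_acS]
  field_simp
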